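/- arXiv:2107.01835 — 5 statements merged into one kernel-verified Lean document; each statement's English description precedes it below -/
import Mathlib

section
/- For any cumulative distribution function F on [0,1] and values 0 < v1 < v2 < 1, any largest maximizer b*_{v1} of b ↦ (v1 - b)F(b) is at most any largest maximizer b*_{v2} of b ↦ (v2 - b)F(b). In other words, the map v ↦ b*_{v,F} (the largest maximizer of the first-price utility) is non-decreasing in v. -/
open Set

/-- monotonicity of the largest maximizer of the first-price utility
`b ↦ (v - b) * F b` in the value `v`. -/
theorem largest_maximizer_monotone
    (F : ℝ → ℝ) (hFmono : MonotoneOn F (Icc 0 1))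
    (hF01 : ∀ x ∈ Icc (0:ℝ) 1, F x ∈ Icc (0:ℝ) 1)
    (v₁ v₂ b₁ b₂ : ℝ) (hv₁ : 0 < v₁) (hv₁₂ : v₁ < v₂) (hv₂ : v₂ < 1)
    (hb₁mem : b₁ ∈ Icc (0:ℝ) 1)
    (hb₁max : IsMaxOn (fun b => (v₁ - b) * F b) (Icc 0 1) b₁)
    (hb₁top : ∀ b ∈ Icc (0:ℝ) 1,
      IsMaxOn (fun b => (v₁ - b) * F b) (Icc 0 1) b → b ≤ b₁)
    (hb₂mem : b₂ ∈ Icc (0:ℝ) 1)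
    (hb₂max : IsMaxOn (fun b => (v₂ - b) * F b) (Icc 0 1) b₂)
    (hb₂top : ∀ b ∈ Icc (0:ℝ) 1,
      IsMaxOn (fun b => (v₂ - b) * F b) (Icc 0 1) b → b ≤ b₂) :
    b₁ ≤ b₂ := by
  by_contra h
  push_neg at h
  have h1 : (v₁ - b₂) * F b₂ ≤ (v₁ - b₁) * F b₁ := hb₁max hb₂mem
  have h2 : (v₂ - b₁) * F b₁ ≤ (v₂ - b₂) * F b₂ := hb₂max hb₁mem
  have hFle : F b₂ ≤ F b₁ := hFmono hb₂mem hb₁mem h.le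
  have hFeq : F b₂ = F b₁ := le_antisymm hFle (by nlinarith)
  rcases lt_or_eq_of_le (hF01 b₁ hb₁mem).1 with hpos | hzero
  · -- F b₁ > 0: from h1 and hFeq we get b₁ ≤ b₂, contradiction
    rw [hFeq] at h1
    nlinarith [mul_pos (sub_pos.mpr h) hpos]
  · -- F b₁ = 0
    have hF2 : F b₂ = 0 := by rw [hFeq, ← hzero]
    have hmax : IsMaxOn (fun b => (v₂ - b) * F b) (Icc 0 1) b₁ := by
      intro x hx
      have := hb₂max hx
      simp only [mem_setOf_eq] at *
      rw [← hzero, hF2] at *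
      linarith [this]
    exact absurd (hb₂top b₁ hb₁mem hmax) (not_le.mpr h)
end

section
/- If F : [0,1] → [0,1] is continuously differentiable with derivative f, strictly log-concave (i.e., f/F is strictly decreasing on (0,1)), and f does not vanish on (0,1), then for any v ∈ [0,1] the function b ↦ (v - b)F(b) has a unique maximizer on [0,1]. -/
open Set

/-- if `F` is a continuously differentiable CDF on `[0,1]` with density `f`,
strictly log-concave (`f / F` strictly decreasing on `(0,1)`) and `f` not vanishing on
`(0,1)`, then for every `v ∈ [0,1]` the first-price utility `b ↦ (v - b) * F b`
has a unique maximizer on `[0,1]`. -/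
theorem unique_maximizer_of_strict_logconcave
    (F f : ℝ → ℝ)
    (hderiv : ∀ x ∈ Icc (0:ℝ) 1, HasDerivAt F (f x) x)
    (hfcont : ContinuousOn f (Icc 0 1))
    (hF0 : F 0 = 0) (hF1 : F 1 = 1)
    (hF01 : ∀ x ∈ Icc (0:ℝ) 1, F x ∈ Icc (0:ℝ) 1)
    (hlogconcave : StrictAntiOn (fun x => f x / F x) (Ioo 0 1))
    (hfne : ∀ x ∈ Ioo (0:ℝ) 1, f x ≠ 0)
    (v : ℝ) (hv : v ∈ Icc (0:ℝ) 1) :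
    ∃! b, b ∈ Icc (0:ℝ) 1 ∧ IsMaxOn (fun b => (v - b) * F b) (Icc 0 1) b := by
  set U : ℝ → ℝ := fun b => (v - b) * F b with hU
  have hFcont : ContinuousOn F (Icc 0 1) := fun x hx =>
    (hderiv x hx).continuousAt.continuousWithinAt
  -- f is positive on (0,1)
  have fpos : ∀ x ∈ Ioo (0:ℝ) 1, 0 < f x := by
    intro x hx
    by_contra h
    have hxlt : f x < 0 := lt_of_le_of_ne (not_lt.mp h) (hfne x hx)
    obtain ⟨c, hc, hfc⟩ := exists_hasDerivAt_eq_slope F f (by norm_num : (0:ℝ) < 1)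
      hFcont (fun y hy => hderiv y ⟨le_of_lt hy.1, le_of_lt hy.2⟩)
    have hfc1 : f c = 1 := by simpa [hF0, hF1] using hfc
    have hsub : uIcc x c ⊆ Ioo (0:ℝ) 1 := Set.ordConnected_Ioo.uIcc_subset hx hc
    have hcont : ContinuousOn f (uIcc x c) :=
      hfcont.mono (hsub.trans Ioo_subset_Icc_self)
    have : (0:ℝ) ∈ uIcc (f x) (f c) := by
      rw [hfc1]
      exact ⟨by simp [min_le_iff, hxlt.le], by simp [le_max_iff]⟩
    obtain ⟨z, hz, hfz⟩ := intermediate_value_uIcc hcont this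
    exact hfne z (hsub hz) hfz
  -- F is positive on (0,1]
  have Fpos : ∀ b ∈ Ioc (0:ℝ) 1, 0 < F b := by
    intro b hb
    obtain ⟨c, hc, hfc⟩ := exists_hasDerivAt_eq_slope F f hb.1
      (hFcont.mono (Icc_subset_Icc le_rfl hb.2))
      (fun y hy => hderiv y ⟨le_of_lt hy.1, le_of_lt (lt_of_lt_of_le hy.2 hb.2)⟩)
    have hcmem : c ∈ Ioo (0:ℝ) 1 := ⟨hc.1, lt_of_lt_of_le hc.2 hb.2⟩
    have hq : 0 < F b / b := by
      have := hfc ▸ fpos c hcmem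
      simpa [hF0] using this
    rcases div_pos_iff.mp hq with ⟨h, _⟩ | ⟨_, h⟩
    · exact h
    · linarith [hb.1]
  -- existence of a maximizer
  have hUcont : ContinuousOn U (Icc 0 1) :=
    (continuousOn_const.sub continuousOn_id).mul hFcont
  obtain ⟨b₀, hb₀mem, hb₀max⟩ := isCompact_Icc.exists_isMaxOn
    (nonempty_Icc.mpr zero_le_one) hUcont
  refine ⟨b₀, ⟨hb₀mem, hb₀max⟩, ?_⟩
  -- uniqueness
  rcases eq_or_lt_of_le hv.1 with hv0 | hv0
  · -- v = 0 : only maximizer is 0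
    have key : ∀ b, b ∈ Icc (0:ℝ) 1 → IsMaxOn U (Icc 0 1) b → b = 0 := by
      intro b hb hmax
      by_contra hne
      have hb0 : 0 < b := lt_of_le_of_ne hb.1 (Ne.symm hne)
      have hUb : U b < 0 := by
        have hFb := Fpos b ⟨hb0, hb.2⟩
        have : U b = (0 - b) * F b := by rw [hU]; simp [← hv0]
        rw [this]
        nlinarith
      have hU0 : U 0 = 0 := by simp [hU, hF0]
      have := isMaxOn_iff.mp hmax 0 (by constructor <;> norm_num)
      rw [hU0] at this
      linarith
    intro y hy
    rw [key y hy.1 hy.2, key b₀ hb₀mem hb₀max]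
  · -- v > 0 : maximizers are interior critical points
    have key : ∀ b, b ∈ Icc (0:ℝ) 1 → IsMaxOn U (Icc 0 1) b →
        b ∈ Ioo (0:ℝ) 1 ∧ b < v ∧ f b / F b = 1 / (v - b) := by
      intro b hb hmax
      have ht : v / 2 ∈ Ioo (0:ℝ) 1 := ⟨by linarith, by linarith [hv.2]⟩
      have hUt : 0 < U (v / 2) := by
        have hF := Fpos (v/2) ⟨ht.1, ht.2.le⟩
        rw [hU]; dsimp only
        nlinarith
      have hUb : 0 < U b := lt_of_lt_of_le hUt
        (isMaxOn_iff.mp hmax (v/2) ⟨ht.1.le, ht.2.le⟩)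
      have hFb : 0 ≤ F b := (hF01 b hb).1
      have hvb : b < v := by
        rw [hU] at hUb; dsimp only at hUb; nlinarith
      have hFbpos : 0 < F b := by
        rw [hU] at hUb; dsimp only at hUb; nlinarith
      have hb0 : 0 < b := by
        rcases eq_or_lt_of_le hb.1 with h | h
        · exfalso; rw [← h, hF0] at hFbpos; linarith
        · exact h
      have hb1 : b < 1 := lt_of_lt_of_le hvb hv.2
      have hbo : b ∈ Ioo (0:ℝ) 1 := ⟨hb0, hb1⟩
      -- derivative is zero at b
      have hd : HasDerivAt U (-1 * F b + (v - b) * f b) b :=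
        (((hasDerivAt_id b).const_sub v)).mul (hderiv b hb)
      have hzero : -1 * F b + (v - b) * f b = 0 := by
        have hloc : IsLocalMax U b := hmax.isLocalMax (Icc_mem_nhds hb0 hb1)
        exact hloc.hasDerivAt_eq_zero hd
      refine ⟨hbo, hvb, ?_⟩
      rw [div_eq_div_iff hFbpos.ne' (by linarith : v - b ≠ 0)]
      linarith
    intro y hy
    obtain ⟨hyo, hyv, hyeq⟩ := key y hy.1 hy.2
    obtain ⟨hbo, hbv, hbeq⟩ := key b₀ hb₀mem hb₀max
    rcases lt_trichotomy y b₀ with h | h | h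
    · exfalso
      have h1 := hlogconcave hyo hbo h
      dsimp only at h1
      rw [hyeq, hbeq] at h1
      have : 1 / (v - y) < 1 / (v - b₀) :=
        one_div_lt_one_div_of_lt (by linarith) (by linarith)
      linarith
    · exact h
    · exfalso
      have h1 := hlogconcave hbo hyo h
      dsimp only at h1
      rw [hyeq, hbeq] at h1
      have : 1 / (v - b₀) < 1 / (v - y) :=
        one_div_lt_one_div_of_lt (by linarith) (by linarith)
      linarith
end

section
/- If F is a continuously differentiable CDF on [0,1] with density f such that f/F is decreasing on (0,1), and b* is the maximizer of b ↦ (v-b)F(b) (satisfying (v - b*)f(b*) = F(b*) with b* < v), then F(b*) ≥ F(v)/e. -/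
open Set

/-- if `F` is a continuously differentiable CDF with density `f` such that
`f / F` is decreasing on `(0,1)`, and `b*` is the maximizer of `b ↦ (v - b) * F b`,
satisfying the first-order condition `(v - b*) * f b* = F b*` with `0 < b* < v`, then
`F b* ≥ F v / e`. -/
theorem winning_rate_at_optimum
    (F f : ℝ → ℝ)
    (hderiv : ∀ x ∈ Icc (0:ℝ) 1, HasDerivAt F (f x) x)
    (hfcont : ContinuousOn f (Icc 0 1))
    (hF0 : F 0 = 0) (hF1 : F 1 = 1)
    (hantitone : AntitoneOn (fun x => f x / F x) (Ioo 0 1))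
    (v bs : ℝ) (hv : v ∈ Icc (0:ℝ) 1) (hbs : bs ∈ Ioo 0 v)
    (hFbs : 0 < F bs)
    (hmax : IsMaxOn (fun b => (v - b) * F b) (Icc 0 1) bs)
    (hfoc : (v - bs) * f bs = F bs) :
    F bs ≥ F v / Real.exp 1 := by
  obtain ⟨hbs0, hbsv⟩ := hbs
  have hv1 : v ≤ 1 := hv.2
  have hd : (0:ℝ) < v - bs := by linarith
  have hFcont : ContinuousOn F (Icc 0 1) := fun x hx =>
    (hderiv x hx).continuousAt.continuousWithinAt
  set g : ℝ → ℝ := fun x => F x * Real.exp (-(x - bs) / (v - bs)) with hg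
  -- derivative of g at any point of Icc 0 1
  have hgderivAt : ∀ x ∈ Icc (0:ℝ) 1,
      HasDerivAt g (f x * Real.exp (-(x - bs) / (v - bs))
        + F x * (Real.exp (-(x - bs) / (v - bs)) * (-1 / (v - bs)))) x := by
    intro x hx
    have hu : HasDerivAt (fun y : ℝ => -(y - bs) / (v - bs)) (-1 / (v - bs)) x :=
      (((hasDerivAt_id x).sub_const bs).neg).div_const (v - bs)
    exact (hderiv x hx).mul hu.exp
  have hgv : g v = F v * Real.exp (-1) := by
    simp only [hg]
    rw [neg_div, div_self hd.ne']
  have hgbs : g bs = F bs := by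
    simp [hg]
  -- key claim
  have hkey : g v ≤ g bs := by
    by_contra hcon
    push_neg at hcon
    set S : Set ℝ := Icc bs v ∩ g ⁻¹' (Iic (F bs)) with hS
    have hbsS : bs ∈ S := ⟨⟨le_refl _, hbsv.le⟩, by simp [hgbs.le]⟩
    have hSsub : S ⊆ Icc bs v := inter_subset_left
    have hgcont : ContinuousOn g (Icc bs v) := by
      apply ContinuousOn.mul
      · exact hFcont.mono (Icc_subset_Icc hbs0.le hv1)
      · exact (Real.continuous_exp.comp (by continuity)).continuousOn
    have hSclosed : IsClosed S :=
      hgcont.preimage_isClosed_of_isClosed isClosed_Icc isClosed_Iic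
    have hSbdd : BddAbove S := ⟨v, fun x hx => (hSsub hx).2⟩
    set c := sSup S with hc
    have hcS : c ∈ S := hSclosed.csSup_mem ⟨bs, hbsS⟩ hSbdd
    have hcIcc : c ∈ Icc bs v := hSsub hcS
    have hgc : g c ≤ F bs := hcS.2
    have hclt : c < v := by
      rcases lt_or_eq_of_le hcIcc.2 with h | h
      · exact h
      · exfalso; rw [h] at hgc; rw [hgbs] at hcon; linarith
    -- positivity of F on (c, v)
    have hFpos : ∀ x ∈ Ioo c v, 0 < F x := by
      intro x hx
      have hxS : x ∉ S := fun hmem => absurd (le_csSup hSbdd hmem) (not_le.mpr hx.1)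
      have hxIcc : x ∈ Icc bs v := ⟨le_trans hcIcc.1 hx.1.le, hx.2.le⟩
      have hgx : F bs < g x := by
        by_contra h
        exact hxS ⟨hxIcc, by simpa using not_lt.mp h⟩
      have hE : 0 < Real.exp (-(x - bs) / (v - bs)) := Real.exp_pos _
      simp only [hg] at hgx
      by_contra hcon2
      push_neg at hcon2
      have : F x * Real.exp (-(x - bs) / (v - bs)) ≤ 0 :=
        mul_nonpos_of_nonpos_of_nonneg hcon2 hE.le
      linarith
    -- g is antitone on [c, v]
    have hanti : AntitoneOn g (Icc c v) := by
      apply antitoneOn_of_deriv_nonpos (convex_Icc c v)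
        (hgcont.mono (Icc_subset_Icc hcIcc.1 le_rfl))
      · intro x hx
        rw [interior_Icc] at hx
        have hx01 : x ∈ Icc (0:ℝ) 1 :=
          ⟨by linarith [hcIcc.1, hx.1], by linarith [hx.2]⟩
        exact (hgderivAt x hx01).differentiableAt.differentiableWithinAt
      · intro x hx
        rw [interior_Icc] at hx
        have hx01 : x ∈ Icc (0:ℝ) 1 :=
          ⟨by linarith [hcIcc.1, hx.1], by linarith [hx.2]⟩
        rw [(hgderivAt x hx01).deriv]
        have hFx : 0 < F x := hFpos x hx
        have hxIoo : x ∈ Ioo (0:ℝ) 1 := ⟨by linarith [hcIcc.1, hx.1], by linarith [hx.2]⟩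
        have hbsIoo : bs ∈ Ioo (0:ℝ) 1 := ⟨hbs0, by linarith⟩
        have hbsx : bs ≤ x := le_trans hcIcc.1 hx.1.le
        have hant := hantitone hbsIoo hxIoo hbsx
        simp only at hant
        have hratio : f bs / F bs = 1 / (v - bs) := by
          field_simp
          linarith [hfoc]
        rw [hratio] at hant
        have hfle : f x ≤ F x / (v - bs) := by
          rw [div_le_div_iff₀ hFx hd] at hant
          rw [le_div_iff₀ hd]
          linarith
        have hE : 0 < Real.exp (-(x - bs) / (v - bs)) := Real.exp_pos _
        have : f x * Real.exp (-(x - bs) / (v - bs))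
            + F x * (Real.exp (-(x - bs) / (v - bs)) * (-1 / (v - bs)))
            = Real.exp (-(x - bs) / (v - bs)) * (f x - F x / (v - bs)) := by
          field_simp
          ring
        rw [this]
        exact mul_nonpos_of_nonneg_of_nonpos hE.le (by linarith)
    have : g v ≤ g c := hanti ⟨le_rfl, hclt.le⟩ ⟨hclt.le, le_rfl⟩ hclt.le
    rw [hgbs] at hcon
    linarith
  rw [hgv, hgbs] at hkey
  rw [ge_iff_le, div_le_iff₀ (Real.exp_pos 1)]
  have h1 : Real.exp (-1) = (Real.exp 1)⁻¹ := Real.exp_neg 1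
  rw [h1] at hkey
  have hE1 : (0:ℝ) < Real.exp 1 := Real.exp_pos 1
  calc F v = F v * (Real.exp 1)⁻¹ * Real.exp 1 := by field_simp
    _ ≤ F bs * Real.exp 1 := by nlinarith
end

section
/- Let F be a continuously differentiable, strictly log-concave CDF on [0,1] with density f not vanishing on (0,1), so F is increasing with inverse F^{-1}. Define W_{v,F}(q) = (v - F^{-1}(q))·q for q ∈ [0,1] and let q* be its maximizer. Then for every q ∈ [0,1], W_{v,F}(q*) − W_{v,F}(q) ≥ (1/4)·(q* − q)²·W_{v,F}(q*). -/
open Set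

set_option maxHeartbeats 1600000

/-- Core scalar inequality: for `0 < q ≤ 1`, `0 < qs ≤ 1`,
`(1/4)(qs-q)² qs ≤ qs - q + q (log q - log qs)`. -/
lemma core_log_ineq (q qs : ℝ) (hq0 : 0 < q) (hq1 : q ≤ 1) (hqs0 : 0 < qs) (hqs1 : qs ≤ 1) :
    (1/4) * (qs - q)^2 * qs ≤ qs - q + q * (Real.log q - Real.log qs) := by
  have hu0 : 0 < q/qs := div_pos hq0 hqs0
  set s : ℝ := (q/qs) ^ ((1:ℝ)/4) with hs_def
  have hs0 : 0 < s := Real.rpow_pos_of_pos hu0 _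
  have hs4 : s^4 = q/qs := by
    rw [hs_def, ← Real.rpow_natCast ((q/qs) ^ ((1:ℝ)/4)) 4, ← Real.rpow_mul hu0.le]
    norm_num
  have hq_eq : q = qs * s^4 := by rw [hs4]; field_simp
  have hlogs : Real.log q - Real.log qs = 4 * Real.log s := by
    rw [hs_def, Real.log_rpow hu0, Real.log_div (ne_of_gt hq0) (ne_of_gt hqs0)]; ring
  have hls : 1 - 1/s ≤ Real.log s := by
    have h := Real.log_le_sub_one_of_pos (show (0:ℝ) < 1/s by positivity)
    rw [Real.log_div one_ne_zero (ne_of_gt hs0), Real.log_one] at h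
    linarith
  have hmain : (1/4) * qs^2 * (1 - s^4)^2 ≤ 1 + 3*s^4 - 4*s^3 := by
    by_cases hcase : s^4 ≤ 2
    · have hqs2 : qs^2 ≤ 1 := by nlinarith
      have hpoly : (1 - s^4)^2 ≤ 4 + 12*s^4 - 16*s^3 := by
        nlinarith [sq_nonneg (s-1), sq_nonneg (s^2-1), sq_nonneg (s^2-s), sq_nonneg (s^2+s-2),
          mul_pos hs0 hs0, sq_nonneg ((s-1)^2)]
      nlinarith [sq_nonneg (1 - s^4), sq_nonneg qs]
    · push_neg at hcase
      have hs1 : 1 ≤ s := by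
        by_contra h
        push_neg at h
        have : s^4 ≤ 1 := le_of_lt (pow_lt_one₀ hs0.le h (by norm_num))
        linarith
      have h1 : qs * s^4 ≤ 1 := by rw [← hq_eq]; exact hq1
      have h2 : qs * (s^4 - 1) ≤ 1 := by nlinarith
      have h2' : 0 ≤ qs * (s^4 - 1) := by nlinarith
      have h3 : qs^2 * (1 - s^4)^2 ≤ 1 := by nlinarith [h2, h2']
      have hpoly : 1 ≤ 4 + 12*s^4 - 16*s^3 := by
        nlinarith [sq_nonneg (s-1), sq_nonneg (s^2-1), sq_nonneg (3*s^2-4*s), sq_nonneg (s^2-s),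
          mul_pos hs0 hs0]
      linarith
  have key : (1/4) * (qs - q)^2 * qs ≤ qs - q + q * (4 * (1 - 1/s)) := by
    have h4 : q * (4 * (1 - 1/s)) = 4*qs*s^4 - 4*qs*s^3 := by
      rw [hq_eq]; field_simp
    have hmul := mul_le_mul_of_nonneg_left hmain (le_of_lt hqs0)
    have e1 : (1/4) * (qs - q)^2 * qs = qs * ((1/4) * qs^2 * (1 - s^4)^2) := by
      rw [hq_eq]; ring
    have e2 : qs - q + (4*qs*s^4 - 4*qs*s^3) = qs * (1 + 3*s^4 - 4*s^3) := by
      rw [hq_eq]; ring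
    rw [h4, e1]
    linarith [e2 ▸ hmul]
  have hmono : q * (4 * (1 - 1/s)) ≤ q * (Real.log q - Real.log qs) := by
    rw [hlogs]
    exact mul_le_mul_of_nonneg_left (by linarith) (le_of_lt hq0)
  linarith

/-- under strict log-concavity of the CDF `F` (with non-vanishing density),
the utility expressed in quantile space, `W q = (v - F⁻¹ q) * q`, deviates from its
maximum at least quadratically: `W q* - W q ≥ (1/4) * (q* - q)^2 * W q*`. -/
theorem quantile_utility_quadratic_lower_bound
    (F f Finv : ℝ → ℝ)
    (hderiv : ∀ x ∈ Icc (0:ℝ) 1, HasDerivAt F (f x) x)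
    (hfcont : ContinuousOn f (Icc 0 1))
    (hF0 : F 0 = 0) (hF1 : F 1 = 1)
    (hlogconcave : StrictAntiOn (fun x => f x / F x) (Ioo 0 1))
    (hfne : ∀ x ∈ Ioo (0:ℝ) 1, f x ≠ 0)
    (hFinv : ∀ q ∈ Icc (0:ℝ) 1, Finv q ∈ Icc (0:ℝ) 1 ∧ F (Finv q) = q)
    (hFinv' : ∀ x ∈ Icc (0:ℝ) 1, Finv (F x) = x)
    (v : ℝ) (hv : v ∈ Icc (0:ℝ) 1)
    (qs : ℝ) (hqs : qs ∈ Icc (0:ℝ) 1)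
    (hqsmax : IsMaxOn (fun q => (v - Finv q) * q) (Icc 0 1) qs) :
    ∀ q ∈ Icc (0:ℝ) 1,
      (v - Finv qs) * qs - (v - Finv q) * q ≥
        (1 / 4) * (qs - q) ^ 2 * ((v - Finv qs) * qs) := by
  intro q hq
  have hWmax : ∀ r ∈ Icc (0:ℝ) 1, (v - Finv r) * r ≤ (v - Finv qs) * qs := fun r hr => hqsmax hr
  have hFinv0 : Finv 0 = 0 := by
    have h := hFinv' 0 (by constructor <;> norm_num)
    rwa [hF0] at h
  have hFinv1 : Finv 1 = 1 := by
    have h := hFinv' 1 (by constructor <;> norm_num)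
    rwa [hF1] at h
  have hWqs_nonneg : 0 ≤ (v - Finv qs) * qs := by
    have h := hWmax 0 (by constructor <;> norm_num)
    simpa using h
  have hWq_le : (v - Finv q) * q ≤ (v - Finv qs) * qs := hWmax q hq
  have hD1 : (qs - q)^2 ≤ 1 := by nlinarith [hq.1, hq.2, hqs.1, hqs.2]
  rcases eq_or_lt_of_le hWqs_nonneg with hWqs0 | hWqs_pos
  · rw [← hWqs0]
    simp only [mul_zero]
    linarith [hWq_le]
  by_cases hWq : (v - Finv q) * q ≤ 0
  · nlinarith [mul_le_mul_of_nonneg_right hD1 hWqs_nonneg]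
  push_neg at hWq
  -- now 0 < W q, 0 < W qs; deduce q, qs ∈ (0,1)
  have hq0 : 0 < q := by
    rcases eq_or_lt_of_le hq.1 with h | h
    · exfalso; rw [← h] at hWq; simp at hWq
    · exact h
  have hq1 : q < 1 := by
    rcases eq_or_lt_of_le hq.2 with h | h
    · exfalso; rw [h, hFinv1] at hWq; nlinarith [hv.2]
    · exact h
  have hqs0 : 0 < qs := by
    rcases eq_or_lt_of_le hqs.1 with h | h
    · exfalso; rw [← h] at hWqs_pos; simp at hWqs_pos
    · exact h
  have hqs1 : qs < 1 := by
    rcases eq_or_lt_of_le hqs.2 with h | h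
    · exfalso; rw [h, hFinv1] at hWqs_pos; nlinarith [hv.2]
    · exact h
  set b := Finv q with hb_def
  set bs := Finv qs with hbs_def
  obtain ⟨hbIcc, hFb⟩ := hFinv q hq
  obtain ⟨hbsIcc, hFbs⟩ := hFinv qs hqs
  have hbIoo : b ∈ Ioo (0:ℝ) 1 := by
    constructor
    · rcases eq_or_lt_of_le hbIcc.1 with h | h
      · exfalso; rw [← h, hF0] at hFb; exact absurd hFb.symm (ne_of_gt hq0)
      · exact h
    · rcases eq_or_lt_of_le hbIcc.2 with h | h
      · exfalso; rw [h, hF1] at hFb; exact absurd hFb.symm (ne_of_lt hq1)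
      · exact h
  have hbsIoo : bs ∈ Ioo (0:ℝ) 1 := by
    constructor
    · rcases eq_or_lt_of_le hbsIcc.1 with h | h
      · exfalso; rw [← h, hF0] at hFbs; exact absurd hFbs.symm (ne_of_gt hqs0)
      · exact h
    · rcases eq_or_lt_of_le hbsIcc.2 with h | h
      · exfalso; rw [h, hF1] at hFbs; exact absurd hFbs.symm (ne_of_lt hqs1)
      · exact h
  -- positivity of shades
  have hS : 0 < v - b := by
    by_contra h
    push_neg at h
    nlinarith [hWq]
  have hSs : 0 < v - bs := by
    by_contra h
    push_neg at h
    nlinarith [hWqs_pos]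
  -- F is continuous and strictly monotone on [0,1]
  have hFcont : ContinuousOn F (Icc 0 1) :=
    fun x hx => (hderiv x hx).continuousAt.continuousWithinAt
  have hFinj : InjOn F (Icc 0 1) := fun x hx y hy hxy => by
    rw [← hFinv' x hx, ← hFinv' y hy, hxy]
  have hFmono : StrictMonoOn F (Icc 0 1) :=
    ContinuousOn.strictMonoOn_of_injOn_Icc zero_le_one (by rw [hF0, hF1]; norm_num) hFcont hFinj
  have hFpos : ∀ x ∈ Ioo (0:ℝ) 1, 0 < F x := by
    intro x hx
    have h := hFmono (left_mem_Icc.mpr zero_le_one) ⟨hx.1.le, hx.2.le⟩ hx.1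
    rwa [hF0] at h
  -- first order condition at bs
  have hUmax : IsMaxOn (fun x => (v - x) * F x) (Icc 0 1) bs := by
    intro x hx
    simp only [Set.mem_setOf_eq]
    have l1 : F 0 ≤ F x := hFmono.monotoneOn (left_mem_Icc.mpr zero_le_one) hx hx.1
    have l2 : F x ≤ F 1 := hFmono.monotoneOn hx (right_mem_Icc.mpr zero_le_one) hx.2
    rw [hF0] at l1; rw [hF1] at l2
    have h := hWmax (F x) ⟨l1, l2⟩
    rw [hFinv' x hx] at h
    calc (v - x) * F x ≤ (v - Finv qs) * qs := h
    _ = (v - bs) * F bs := by rw [hFbs, ← hbs_def]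
  have hU : HasDerivAt (fun x => (v - x) * F x) ((-1) * F bs + (v - bs) * f bs) bs :=
    ((hasDerivAt_id bs).const_sub v).mul (hderiv bs hbsIcc)
  have hnhds : Icc (0:ℝ) 1 ∈ nhds bs := Icc_mem_nhds hbsIoo.1 hbsIoo.2
  have hfoc : (-1) * F bs + (v - bs) * f bs = 0 :=
    (hUmax.isLocalMax hnhds).hasDerivAt_eq_zero hU
  have hfoc2 : (v - bs) * f bs = qs := by rw [hFbs] at hfoc; linarith
  have hfbs : 0 < f bs := by
    by_contra h
    push_neg at h
    nlinarith [hfoc2]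
  -- log F has derivative f/F on (0,1)
  have hlogF : ∀ x ∈ Ioo (0:ℝ) 1, HasDerivAt (fun y => Real.log (F y)) (f x / F x) x :=
    fun x hx => (hderiv x (Ioo_subset_Icc_self hx)).log (ne_of_gt (hFpos x hx))
  -- tangent line inequality for the concave function log ∘ F at bs
  have htan : Real.log (F b) - Real.log (F bs) ≤ f bs / F bs * (b - bs) := by
    rcases lt_trichotomy b bs with hlt | heq | hgt
    · have hsub : Icc b bs ⊆ Ioo (0:ℝ) 1 := fun x hx =>
        ⟨lt_of_lt_of_le hbIoo.1 hx.1, lt_of_le_of_lt hx.2 hbsIoo.2⟩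
      have hcont : ContinuousOn (fun y => Real.log (F y)) (Icc b bs) :=
        fun x hx => (hlogF x (hsub hx)).continuousAt.continuousWithinAt
      obtain ⟨c, hc, hceq⟩ := exists_hasDerivAt_eq_slope (fun y => Real.log (F y))
        (fun y => f y / F y) hlt hcont
        (fun x hx => hlogF x (hsub (Ioo_subset_Icc_self hx)))
      have hcmem : c ∈ Ioo (0:ℝ) 1 := hsub (Ioo_subset_Icc_self hc)
      have hanti := hlogconcave hcmem hbsIoo hc.2
      simp only at hanti hceq
      rw [hceq] at hanti
      have hden : 0 < bs - b := by linarith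
      rw [lt_div_iff₀ hden] at hanti
      have heq2 : f bs / F bs * (b - bs) = -(f bs / F bs * (bs - b)) := by ring
      rw [heq2]
      linarith
    · rw [heq]; simp
    · have hsub : Icc bs b ⊆ Ioo (0:ℝ) 1 := fun x hx =>
        ⟨lt_of_lt_of_le hbsIoo.1 hx.1, lt_of_le_of_lt hx.2 hbIoo.2⟩
      have hcont : ContinuousOn (fun y => Real.log (F y)) (Icc bs b) :=
        fun x hx => (hlogF x (hsub hx)).continuousAt.continuousWithinAt
      obtain ⟨c, hc, hceq⟩ := exists_hasDerivAt_eq_slope (fun y => Real.log (F y))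
        (fun y => f y / F y) hgt hcont
        (fun x hx => hlogF x (hsub (Ioo_subset_Icc_self hx)))
      have hcmem : c ∈ Ioo (0:ℝ) 1 := hsub (Ioo_subset_Icc_self hc)
      have hanti := hlogconcave hbsIoo hcmem hc.1
      simp only at hanti hceq
      rw [hceq] at hanti
      have hden : 0 < b - bs := by linarith
      rw [div_lt_iff₀ hden] at hanti
      linarith
  rw [hFb, hFbs] at htan
  -- rewrite f bs / F bs = 1 / (v - bs)
  have hfrac : f bs / qs = 1 / (v - bs) := by
    have hqsne : qs ≠ 0 := ne_of_gt hqs0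
    have hSsne : v - bs ≠ 0 := ne_of_gt hSs
    field_simp
    linarith [hfoc2]
  rw [hfrac] at htan
  -- key consequence: (v - bs) * (log q - log qs) ≤ b - bs
  have h1 : (v - bs) * (Real.log q - Real.log qs) ≤ b - bs := by
    have h2 : Real.log q - Real.log qs ≤ (b - bs) / (v - bs) := by
      rw [div_eq_mul_inv, mul_comm]
      calc Real.log q - Real.log qs ≤ 1 / (v - bs) * (b - bs) := htan
      _ = (v - bs)⁻¹ * (b - bs) := by rw [one_div]
    have h3 := (le_div_iff₀ hSs).mp h2
    nlinarith [h3]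
  -- upper bound on W q
  have hWq_bound : (v - b) * q ≤ q * ((v - bs) * (1 - (Real.log q - Real.log qs))) := by
    have h4 : v - b ≤ (v - bs) * (1 - (Real.log q - Real.log qs)) := by nlinarith [h1]
    nlinarith [mul_le_mul_of_nonneg_left h4 hq0.le]
  have hcore := core_log_ineq q qs hq0 hq.2 hqs0 hqs.2
  have hcore' := mul_le_mul_of_nonneg_left hcore hSs.le
  nlinarith [hcore', hWq_bound]
end

section
/- Let α, β > 0 with α + β < αβ, and let F be the CDF of the Beta(α, β) distribution with density f(x) = x^{α−1}(1−x)^{β−1}/B(α,β). Then F is strictly log-concave on (0,1): the ratio f(x)/F(x) is strictly decreasing on (0,1). Equivalently, f'(x)F(x) − f(x)² < 0 for all x ∈ (0,1). -/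
open Set intervalIntegral

/-- the Beta(α, β) distribution with `α + β < α * β` is strictly
log-concave: `f / F` is strictly decreasing on `(0,1)`, equivalently
`f' x * F x - f x ^ 2 < 0` on `(0,1)`. -/
theorem beta_strictly_logconcave
    (α β : ℝ) (hα : 0 < α) (hβ : 0 < β) (hcond : α + β < α * β)
    (f F : ℝ → ℝ)
    (hf : ∀ x, f x =
      x ^ (α - 1) * (1 - x) ^ (β - 1) /
        (Real.Gamma α * Real.Gamma β / Real.Gamma (α + β)))
    (hF : ∀ x, F x = ∫ u in (0:ℝ)..x, f u) :
    StrictAntiOn (fun x => f x / F x) (Ioo 0 1) ∧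
      ∀ x ∈ Ioo (0:ℝ) 1, deriv f x * F x - f x ^ 2 < 0 := by
  have hfe : f = fun x => x ^ (α - 1) * (1 - x) ^ (β - 1) /
      (Real.Gamma α * Real.Gamma β / Real.Gamma (α + β)) := funext hf
  have hFe : F = fun x => ∫ u in (0:ℝ)..x, f u := funext hF
  set B : ℝ := Real.Gamma α * Real.Gamma β / Real.Gamma (α + β) with hBdef
  have hB : 0 < B :=
    div_pos (mul_pos (Real.Gamma_pos_of_pos hα) (Real.Gamma_pos_of_pos hβ))
      (Real.Gamma_pos_of_pos (by linarith))
  have hα1 : 1 < α := by nlinarith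
  have hβ1 : 1 < β := by nlinarith
  -- continuity of f
  have hcp : Continuous fun u : ℝ => u ^ (α - 1) := by
    rw [continuous_iff_continuousAt]
    intro u
    refine Real.continuousAt_rpow_const u _ ?_
    rcases eq_or_ne u 0 with h | h
    · exact Or.inr (by linarith)
    · exact Or.inl h
  have hcq : Continuous fun u : ℝ => (1 - u) ^ (β - 1) := by
    have h1 : Continuous fun u : ℝ => u ^ (β - 1) := by
      rw [continuous_iff_continuousAt]
      intro u
      refine Real.continuousAt_rpow_const u _ ?_
      rcases eq_or_ne u 0 with h | h
      · exact Or.inr (by linarith)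
      · exact Or.inl h
    exact h1.comp (continuous_const.sub continuous_id)
  have hfc : Continuous f := by
    rw [hfe]
    exact (hcp.mul hcq).div_const B
  -- F has derivative f everywhere
  have hFd : ∀ x : ℝ, HasDerivAt F (f x) x := by
    intro x
    rw [hFe]
    exact (hfc.integral_hasStrictDerivAt 0 x).hasDerivAt
  have hFc : Continuous F := by
    rw [continuous_iff_continuousAt]
    exact fun x => (hFd x).continuousAt
  have hF0 : F 0 = 0 := by rw [hF]; simp
  have hf0 : f 0 = 0 := by
    rw [hf]
    rw [Real.zero_rpow (by intro h; exact absurd (by linarith : α = 1) (by linarith))]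
    simp
  have hfpos : ∀ u ∈ Ioo (0:ℝ) 1, 0 < f u := by
    intro u hu
    rw [hf]
    have h1 : (0:ℝ) < u := hu.1
    have h2 : (0:ℝ) < 1 - u := by linarith [hu.2]
    positivity
  have hFpos : ∀ x ∈ Ioo (0:ℝ) 1, 0 < F x := by
    intro x hx
    rw [hF]
    refine intervalIntegral_pos_of_pos_on (hfc.intervalIntegrable 0 x) ?_ hx.1
    exact fun u hu => hfpos u ⟨hu.1, hu.2.trans hx.2⟩
  set h : ℝ → ℝ := fun u => (α - 1) / u - (β - 1) / (1 - u) with hhdef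
  -- derivative of f
  have hfd : ∀ u ∈ Ioo (0:ℝ) 1, HasDerivAt f (f u * h u) u := by
    intro u hu
    have hu0 : (0:ℝ) < u := hu.1
    have hu1 : (0:ℝ) < 1 - u := by linarith [hu.2]
    have d1 : HasDerivAt (fun u : ℝ => u ^ (α - 1)) ((α - 1) * u ^ (α - 1 - 1)) u :=
      Real.hasDerivAt_rpow_const (Or.inl hu0.ne')
    have dlin : HasDerivAt (fun u : ℝ => 1 - u) (-1) u := (hasDerivAt_id u).const_sub 1
    have d2' : HasDerivAt (fun v : ℝ => v ^ (β - 1)) ((β - 1) * (1 - u) ^ (β - 1 - 1)) (1 - u) :=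
      Real.hasDerivAt_rpow_const (Or.inl hu1.ne')
    have d2 : HasDerivAt (fun u : ℝ => (1 - u) ^ (β - 1))
        ((β - 1) * (1 - u) ^ (β - 1 - 1) * (-1)) u := d2'.comp u dlin
    have dprod : HasDerivAt (fun x => x ^ (α - 1) * (1 - x) ^ (β - 1) / B) _ u :=
      (d1.mul d2).div_const B
    rw [← hfe] at dprod
    convert dprod using 1
    rw [hf, hhdef]
    have e1 : u ^ (α - 1 - 1) = u ^ (α - 1) / u := by
      rw [show α - 1 - 1 = (α - 1) - 1 from rfl, Real.rpow_sub hu0, Real.rpow_one]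
    have e2 : (1 - u) ^ (β - 1 - 1) = (1 - u) ^ (β - 1) / (1 - u) := by
      rw [show β - 1 - 1 = (β - 1) - 1 from rfl, Real.rpow_sub hu1, Real.rpow_one]
    rw [e1, e2]
    field_simp
    ring
  -- h is strictly decreasing on (0,1)
  have hhmono : ∀ u x : ℝ, 0 < u → u < x → x < 1 → h x < h u := by
    intro u x hu0 hux hx1
    have h1 : (α - 1) / x < (α - 1) / u :=
      div_lt_div_of_pos_left (by linarith) hu0 hux
    have h2 : (β - 1) / (1 - u) < (β - 1) / (1 - x) :=
      div_lt_div_of_pos_left (by linarith) (by linarith) (by linarith)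
    simp only [hhdef]
    linarith
  -- key inequality : h x * F x < f x
  have key : ∀ x ∈ Ioo (0:ℝ) 1, h x * F x < f x := by
    intro x hx
    set Φ : ℝ → ℝ := fun u => f u - h x * F u with hΦdef
    have hΦd : ∀ u ∈ Ioo (0:ℝ) x, HasDerivAt Φ (f u * (h u - h x)) u := by
      intro u hu
      have hu' : u ∈ Ioo (0:ℝ) 1 := ⟨hu.1, hu.2.trans hx.2⟩
      have : HasDerivAt (fun u => f u - h x * F u) (f u * h u - h x * f u) u :=
        (hfd u hu').sub ((hFd u).const_mul (h x))
      convert this using 1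
      ring
    have hΦmono : StrictMonoOn Φ (Icc 0 x) := by
      refine strictMonoOn_of_deriv_pos (convex_Icc 0 x)
        ((hfc.sub (continuous_const.mul hFc)).continuousOn) ?_
      intro u hu
      rw [interior_Icc] at hu
      rw [(hΦd u hu).deriv]
      have hu' : u ∈ Ioo (0:ℝ) 1 := ⟨hu.1, hu.2.trans hx.2⟩
      have hfu := hfpos u hu'
      have hhu := hhmono u x hu.1 hu.2 hx.2
      exact mul_pos hfu (by linarith)
    have h00 : Φ 0 = 0 := by simp [hΦdef, hf0, hF0]
    have hlt : Φ 0 < Φ x :=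
      hΦmono (left_mem_Icc.2 hx.1.le) (right_mem_Icc.2 hx.1.le) hx.1
    rw [h00] at hlt
    simp only [hΦdef] at hlt
    linarith
  constructor
  · refine strictAntiOn_of_deriv_neg (convex_Ioo 0 1) ?_ ?_
    · exact ContinuousOn.div hfc.continuousOn hFc.continuousOn
        (fun x hx => (hFpos x hx).ne')
    · intro x hx
      rw [interior_Ioo] at hx
      have hd : HasDerivAt (fun x => f x / F x)
          ((f x * h x * F x - f x * f x) / F x ^ 2) x :=
        (hfd x hx).div (hFd x) (hFpos x hx).ne'
      rw [hd.deriv]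
      have h1 := key x hx
      have h2 := hfpos x hx
      have h3 := hFpos x hx
      apply div_neg_of_neg_of_pos
      · nlinarith
      · positivity
  · intro x hx
    rw [(hfd x hx).deriv]
    have h1 := key x hx
    have h2 := hfpos x hx
    nlinarith
end
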